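/- arXiv:2212.08134 — 2 statements merged into one kernel-verified Lean document; each statement's English description precedes it below -/
import Mathlib

section
/- Let G be a regular graph on n vertices whose random walk matrix has spectral expansion λ(G) ≤ λ < 1, with vertex labeling val: V → {0,1} assigning label b to p_b-fraction of vertices. Then the asymptotic variance σ² = p_0p_1 + 2·Σ_{i=1}^∞ (1/n)(val-p_1)^T G^i val satisfies |σ² - p_0p_1| ≤ (2λ/(1-λ))·p_0p_1. -/
open Matrix Finset

/-- For a regular graph with random walk matrix of spectral expansion at most λ < 1,
the asymptotic variance σ² = p₀p₁ + 2·Σ_{i≥1}(1/n)(val-p₁)ᵀGⁱval satisfies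
|σ² - p₀p₁| ≤ (2λ/(1-λ))·p₀p₁. -/
theorem asymptotic_variance_close_to_binomial
    {V : Type*} [Fintype V] [DecidableEq V] (lab : V → Bool)
    (lam : ℝ) (hlam0 : 0 ≤ lam) (hlam1 : lam < 1)
    (G : Matrix V V ℝ)
    (hnonneg : ∀ v' v, 0 ≤ G v' v)
    (hcolsum : ∀ v, ∑ v', G v' v = 1)
    (hrowsum : ∀ v', ∑ v, G v' v = 1)
    (hexp : ∀ x : V → ℝ, (∑ v, x v) = 0 →
      ∑ v, (G.mulVec x v) ^ 2 ≤ lam ^ 2 * ∑ v, (x v) ^ 2)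
    (p0 p1 : ℝ)
    (hp0 : p0 = ((univ.filter fun v => lab v = false).card : ℝ) / (Fintype.card V : ℝ))
    (hp1 : p1 = ((univ.filter fun v => lab v = true).card : ℝ) / (Fintype.card V : ℝ))
    (val w : V → ℝ) (hval : ∀ v, val v = if lab v then 1 else 0)
    (hw : ∀ v, w v = val v - p1)
    (σ2 : ℝ)
    (hσ2 : σ2 = p0 * p1 +
      2 * (∑' i : ℕ, (1 / (Fintype.card V : ℝ)) * (w ⬝ᵥ (G ^ (i + 1)).mulVec val))) :
    |σ2 - p0 * p1| ≤ 2 * lam / (1 - lam) * (p0 * p1) := by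
  classical
  set n : ℝ := (Fintype.card V : ℝ) with hn
  by_cases hV : Nonempty V
  swap
  · -- empty case
    have hcard : Fintype.card V = 0 := by
      simp [Fintype.card_eq_zero_iff, not_nonempty_iff.mp hV]
    have hn0 : n = 0 := by rw [hn, hcard]; norm_num
    have hp0' : p0 = 0 := by rw [hp0, hn0, div_zero]
    have hσ0 : σ2 = p0 * p1 := by
      rw [hσ2, hn0]
      simp
    rw [hσ0, hp0']
    simp
  · have hnpos : (0:ℝ) < n := by
      rw [hn]; exact_mod_cast Fintype.card_pos
    -- p0 + p1 = 1
    have hcards : ((univ.filter fun v => lab v = false).card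
        + (univ.filter fun v => lab v = true).card) = Fintype.card V := by
      rw [← Finset.card_union_of_disjoint]
      · congr 1
        ext v
        simp only [Finset.mem_union, Finset.mem_filter, Finset.mem_univ, true_and]
        cases lab v <;> simp
      · rw [Finset.disjoint_left]
        intro a ha hb
        simp only [Finset.mem_filter] at ha hb
        rw [ha.2] at hb; exact Bool.false_ne_true hb.2
    have hp01 : p0 + p1 = 1 := by
      rw [hp0, hp1, ← add_div, div_eq_one_iff_eq (by positivity)]
      rw [hn]
      exact_mod_cast hcards
    have hp1nn : 0 ≤ p1 := by rw [hp1]; positivity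
    have hp0nn : 0 ≤ p0 := by rw [hp0]; positivity
    -- sum of val
    have hsumval : ∑ v, val v = p1 * n := by
      have h1 : ∑ v, val v = ((univ.filter fun v => lab v = true).card : ℝ) := by
        simp only [hval]
        rw [Finset.sum_ite, Finset.sum_const, Finset.sum_const]
        simp
      rw [h1, hp1]
      rw [div_mul_cancel₀ _ (ne_of_gt hnpos)]
    have hsumw : ∑ v, w v = 0 := by
      simp only [hw, Finset.sum_sub_distrib, hsumval, Finset.sum_const,
        nsmul_eq_mul, Finset.card_univ, ← hn]
      ring
    -- norm of w squared
    have hval2 : ∀ v, (val v)^2 = val v := by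
      intro v; rw [hval]; cases lab v <;> simp
    have hw2 : ∑ v, (w v)^2 = n * (p0 * p1) := by
      have h1 : ∀ v, (w v)^2 = (val v)^2 - 2 * p1 * val v + p1^2 := by
        intro v; rw [hw]; ring
      simp only [h1, Finset.sum_add_distrib, Finset.sum_sub_distrib, Finset.sum_const]
      simp only [hval2]
      rw [hsumval, ← Finset.mul_sum, hsumval, nsmul_eq_mul, Finset.card_univ, ← hn]
      have hq : p0 = 1 - p1 := by linarith
      rw [hq]; ring
    -- G^k preserves the constant-1 vector and zero-sum subspace
    have hones : ∀ k : ℕ, (G ^ k).mulVec (fun _ => (1:ℝ)) = fun _ => (1:ℝ) := by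
      intro k
      induction k with
      | zero => funext v; simp [Matrix.mulVec, dotProduct, Matrix.one_apply]
      | succ k ih =>
        rw [pow_succ', ← Matrix.mulVec_mulVec, ih]
        funext v'
        simp [Matrix.mulVec, dotProduct, hrowsum]
    have hzero : ∀ x : V → ℝ, (∑ v, x v) = 0 → ∑ v, G.mulVec x v = 0 := by
      intro x hx
      simp only [Matrix.mulVec, dotProduct]
      rw [Finset.sum_comm]
      have h2 : ∀ u, ∑ v', G v' u * x u = x u := by
        intro u; rw [← Finset.sum_mul, hcolsum, one_mul]
      simp only [h2]
      exact hx
    have hiter : ∀ k : ℕ, (∑ v, (G ^ k).mulVec w v = 0) ∧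
        ∑ v, ((G ^ k).mulVec w v)^2 ≤ (lam^2)^k * ∑ v, (w v)^2 := by
      intro k
      induction k with
      | zero => simp [hsumw]
      | succ k ih =>
        have hrw : (G ^ (k+1)).mulVec w = G.mulVec ((G ^ k).mulVec w) := by
          rw [pow_succ', ← Matrix.mulVec_mulVec]
        constructor
        · rw [hrw]; exact hzero _ ih.1
        · rw [hrw]
          calc ∑ v, (G.mulVec ((G ^ k).mulVec w) v)^2
              ≤ lam^2 * ∑ v, ((G ^ k).mulVec w v)^2 := hexp _ ih.1
            _ ≤ lam^2 * ((lam^2)^k * ∑ v, (w v)^2) := by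
                apply mul_le_mul_of_nonneg_left ih.2 (by positivity)
            _ = (lam^2)^(k+1) * ∑ v, (w v)^2 := by ring
    -- the key termwise bound
    have hterm : ∀ i : ℕ,
        |(1 / n) * (w ⬝ᵥ (G ^ (i + 1)).mulVec val)| ≤ p0 * p1 * lam * lam ^ i := by
      intro i
      have hvw : val = w + (fun _ => p1) := by
        funext v; simp [hw]
      have hsplit : w ⬝ᵥ (G ^ (i+1)).mulVec val = w ⬝ᵥ (G ^ (i+1)).mulVec w := by
        rw [hvw, Matrix.mulVec_add, dotProduct_add]
        have hc : (G ^ (i+1)).mulVec (fun _ => p1) = fun _ => p1 := by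
          have hs : (fun _ : V => p1) = p1 • (fun _ : V => (1:ℝ)) := by
            funext v; simp
          rw [hs, Matrix.mulVec_smul, hones (i+1)]
        rw [hc]
        have hd : w ⬝ᵥ (fun _ => p1) = p1 * ∑ v, w v := by
          simp [dotProduct, mul_comm, ← Finset.mul_sum]
        rw [hd, hsumw]
        ring
      rw [hsplit]
      set y := (G ^ (i+1)).mulVec w with hy
      have hcs : (w ⬝ᵥ y)^2 ≤ (∑ v, (w v)^2) * ∑ v, (y v)^2 :=
        Finset.sum_mul_sq_le_sq_mul_sq univ w y
      have hyb : ∑ v, (y v)^2 ≤ (lam^2)^(i+1) * ∑ v, (w v)^2 := (hiter (i+1)).2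
      have hwnn : (0:ℝ) ≤ ∑ v, (w v)^2 := Finset.sum_nonneg fun v _ => sq_nonneg _
      have hsq : (w ⬝ᵥ y)^2 ≤ (lam^(i+1) * ∑ v, (w v)^2)^2 := by
        calc (w ⬝ᵥ y)^2 ≤ (∑ v, (w v)^2) * ∑ v, (y v)^2 := hcs
          _ ≤ (∑ v, (w v)^2) * ((lam^2)^(i+1) * ∑ v, (w v)^2) :=
              mul_le_mul_of_nonneg_left hyb hwnn
          _ = (lam^(i+1) * ∑ v, (w v)^2)^2 := by ring
      have habs : |w ⬝ᵥ y| ≤ lam^(i+1) * ∑ v, (w v)^2 := by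
        have hrhs : 0 ≤ lam^(i+1) * ∑ v, (w v)^2 := by positivity
        rcases abs_cases (w ⬝ᵥ y) with ⟨h1, _⟩ | ⟨h1, _⟩ <;> nlinarith
      rw [abs_mul]
      have h1n : |1 / n| = 1 / n := abs_of_pos (by positivity)
      rw [h1n]
      calc 1 / n * |w ⬝ᵥ y| ≤ 1 / n * (lam^(i+1) * ∑ v, (w v)^2) := by
            apply mul_le_mul_of_nonneg_left habs (by positivity)
        _ = p0 * p1 * lam * lam ^ i := by
            rw [hw2]; field_simp; ring
    -- summability and tsum bound
    have hpp : 0 ≤ p0 * p1 := mul_nonneg hp0nn hp1nn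
    have hgsum : Summable (fun i : ℕ => p0 * p1 * lam * lam ^ i) :=
      (summable_geometric_of_lt_one hlam0 hlam1).mul_left _
    have hfsum : Summable (fun i : ℕ => (1 / n) * (w ⬝ᵥ (G ^ (i + 1)).mulVec val)) := by
      apply Summable.of_abs
      exact Summable.of_nonneg_of_le (fun i => abs_nonneg _) hterm hgsum
    have htsum : |∑' i : ℕ, (1 / n) * (w ⬝ᵥ (G ^ (i + 1)).mulVec val)|
        ≤ p0 * p1 * lam * (1 - lam)⁻¹ := by
      have hgt : ∑' i : ℕ, p0 * p1 * lam * lam ^ i = p0 * p1 * lam * (1 - lam)⁻¹ := by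
        rw [tsum_mul_left, tsum_geometric_of_lt_one hlam0 hlam1]
      rw [abs_le]
      constructor
      · rw [← hgt]
        have hneg : (∑' i : ℕ, -(p0 * p1 * lam * lam ^ i))
            ≤ ∑' i : ℕ, (1 / n) * (w ⬝ᵥ (G ^ (i + 1)).mulVec val) := by
          apply Summable.tsum_le_tsum _ hgsum.neg hfsum
          intro i
          have := (abs_le.mp (hterm i)).1
          linarith
        rw [tsum_neg] at hneg
        linarith
      · rw [← hgt]
        apply Summable.tsum_le_tsum _ hfsum hgsum
        intro i
        exact (abs_le.mp (hterm i)).2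
    have hdiff : σ2 - p0 * p1 = 2 * ∑' i : ℕ, (1 / n) * (w ⬝ᵥ (G ^ (i + 1)).mulVec val) := by
      rw [hσ2]; ring
    rw [hdiff, abs_mul]
    have h2 : |(2:ℝ)| = 2 := by norm_num
    rw [h2]
    calc 2 * |∑' i : ℕ, (1 / n) * (w ⬝ᵥ (G ^ (i + 1)).mulVec val)|
        ≤ 2 * (p0 * p1 * lam * (1 - lam)⁻¹) := by linarith
      _ = 2 * lam / (1 - lam) * (p0 * p1) := by
          have h1l : (1:ℝ) - lam ≠ 0 := by linarith
          field_simp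
end

section
/- For any real u ≥ 2 and integer t with u ≤ t, the integral bound Σ_{a=⌈8√(u log u)⌉}^∞ (a+1)³ e^{-a²/(8u)} ≤ 2⁸·u²·(6 log u + 1)/u⁶ ≤ 2⁸ holds; more precisely, Σ_{a ≥ 8√(u log u)} (a+1)³ e^{-a²/(8u)} ≤ ∫_{8√(u log u)-1}^∞ (2a)³ e^{-a²/(8u)} da ≤ 2⁸ u² ∫_{6 log u}^∞ q e^{-q} dq = 2⁸ u² (6 log u + 1) e^{-6 log u}. -/
open MeasureTheory Set Filter Topology


/-- (x+1)e^{-x} is decreasing on [0,∞). -/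
lemma gtsb_decay {a b : ℝ} (ha : 0 ≤ a) (hab : a ≤ b) :
    (b + 1) * Real.exp (-b) ≤ (a + 1) * Real.exp (-a) := by
  have h1 : (b - a) + 1 ≤ Real.exp (b - a) := Real.add_one_le_exp _
  have h2 : (b + 1) ≤ (a + 1) * Real.exp (b - a) := by nlinarith [Real.exp_pos (b - a)]
  have h3 : Real.exp (-a) = Real.exp (b - a) * Real.exp (-b) := by
    rw [← Real.exp_add]; ring_nf
  rw [h3]
  nlinarith [Real.exp_pos (-b), Real.exp_pos (b - a)]

lemma gtsb_integrable (u : ℝ) (hu : 0 < u) :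
    Integrable (fun x : ℝ => x ^ 3 * Real.exp (-x ^ 2 / (8 * u))) := by
  have h := integrable_rpow_mul_exp_neg_mul_sq (b := 1 / (8 * u)) (by positivity)
    (s := (3 : ℝ)) (by norm_num)
  have he : (fun x : ℝ => x ^ (3 : ℝ) * Real.exp (-(1 / (8 * u)) * x ^ 2)) =
      (fun x : ℝ => x ^ 3 * Real.exp (-x ^ 2 / (8 * u))) := by
    funext x
    rw [show (3 : ℝ) = ((3 : ℕ) : ℝ) by norm_num, Real.rpow_natCast,
      show -(1 / (8 * u)) * x ^ 2 = -x ^ 2 / (8 * u) by ring]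
  rwa [he] at h

lemma gtsb_integral_cube (u : ℝ) (hu : 0 < u) (c : ℝ) :
    ∫ x in Set.Ioi c, x ^ 3 * Real.exp (-x ^ 2 / (8 * u)) =
      (4 * u * c ^ 2 + 32 * u ^ 2) * Real.exp (-c ^ 2 / (8 * u)) := by
  have h8u : (0 : ℝ) < 8 * u := by linarith
  set F : ℝ → ℝ := fun x => -(4 * u * x ^ 2 + 32 * u ^ 2) * Real.exp (-x ^ 2 / (8 * u)) with hF
  have hderiv : ∀ x ∈ Set.Ici c, HasDerivAt F (x ^ 3 * Real.exp (-x ^ 2 / (8 * u))) x := by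
    intro x _
    have h1 : HasDerivAt (fun y : ℝ => -y ^ 2 / (8 * u)) (-(2 * x) / (8 * u)) x := by
      simpa using ((hasDerivAt_pow 2 x).neg).div_const (8 * u)
    have h2 := h1.exp
    have h3 : HasDerivAt (fun y : ℝ => -(4 * u * y ^ 2 + 32 * u ^ 2)) (-(4 * u * (2 * x))) x := by
      have := (((hasDerivAt_pow 2 x).const_mul (4 * u)).add_const (32 * u ^ 2)).neg
      exact this.congr_deriv (by norm_num)
    have h4 := h3.mul h2
    refine h4.congr_deriv ?_
    have hu' : u ≠ 0 := hu.ne'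
    field_simp
    ring
  have hint : IntegrableOn (fun x : ℝ => x ^ 3 * Real.exp (-x ^ 2 / (8 * u))) (Set.Ioi c) :=
    (gtsb_integrable u hu).integrableOn
  have hT : Tendsto (fun x : ℝ => x ^ 2 / (8 * u)) atTop atTop :=
    (tendsto_pow_atTop two_ne_zero).atTop_div_const h8u
  have hq : Tendsto (fun q : ℝ => -(32 * u ^ 2) * ((q + 1) * Real.exp (-q))) atTop (𝓝 0) := by
    have h1 := Real.tendsto_pow_mul_exp_neg_atTop_nhds_zero 1
    have h2 := Real.tendsto_exp_neg_atTop_nhds_zero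
    have h3 := (h1.add h2).const_mul (-(32 * u ^ 2))
    simp only [pow_one, mul_zero, add_zero] at h3
    refine h3.congr fun q => by ring
  have htend : Tendsto F atTop (𝓝 0) := by
    have h5 := hq.comp hT
    refine h5.congr fun x => ?_
    simp only [Function.comp]
    rw [hF]
    have he : -(x ^ 2 / (8 * u)) = -x ^ 2 / (8 * u) := by ring
    rw [he, show -(32 * u ^ 2) * ((x ^ 2 / (8 * u) + 1) * Real.exp (-x ^ 2 / (8 * u))) =
      (-(32 * u ^ 2) * (x ^ 2 / (8 * u) + 1)) * Real.exp (-x ^ 2 / (8 * u)) from by ring]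
    congr 1
    field_simp
    ring
  rw [integral_Ioi_of_hasDerivAt_of_tendsto' hderiv hint htend]
  simp only [hF]
  ring


lemma gtsb_integral_val (u : ℝ) (hu : 0 < u) (c : ℝ) :
    ∫ x in Set.Ioi c, (2 * x) ^ 3 * Real.exp (-x ^ 2 / (8 * u)) =
      2 ^ 8 * u ^ 2 * ((c ^ 2 / (8 * u) + 1) * Real.exp (-(c ^ 2 / (8 * u)))) := by
  have h1 : ∀ x : ℝ, (2 * x) ^ 3 * Real.exp (-x ^ 2 / (8 * u)) =
      8 * (x ^ 3 * Real.exp (-x ^ 2 / (8 * u))) := fun x => by ring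
  simp_rw [h1]
  rw [integral_const_mul, gtsb_integral_cube u hu c,
    show -(c ^ 2 / (8 * u)) = -c ^ 2 / (8 * u) from by ring,
    show (2:ℝ) ^ 8 * u ^ 2 * ((c ^ 2 / (8 * u) + 1) * Real.exp (-c ^ 2 / (8 * u))) =
      (2 ^ 8 * u ^ 2 * (c ^ 2 / (8 * u) + 1)) * Real.exp (-c ^ 2 / (8 * u)) from by ring]
  rw [show (8:ℝ) * ((4 * u * c ^ 2 + 32 * u ^ 2) * Real.exp (-c ^ 2 / (8 * u))) =
      (8 * (4 * u * c ^ 2 + 32 * u ^ 2)) * Real.exp (-c ^ 2 / (8 * u)) from by ring]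
  congr 1
  field_simp
  ring

lemma gtsb_basic (u : ℝ) (hu : 2 ≤ u) :
    0 < Real.log u ∧ 1 ≤ Real.sqrt (u * Real.log u) := by
  have hl2 : (0.6931471803 : ℝ) < Real.log 2 := Real.log_two_gt_d9
  have hlog : Real.log 2 ≤ Real.log u := Real.log_le_log (by norm_num) hu
  have h1 : (1:ℝ) ≤ u * Real.log u := by nlinarith
  refine ⟨by nlinarith, ?_⟩
  rw [show (1:ℝ) = Real.sqrt 1 from (Real.sqrt_one).symm]
  exact Real.sqrt_le_sqrt h1

lemma gtsb_part2 (u : ℝ) (hu : 2 ≤ u) :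
    (∫ a in Set.Ioi (8 * Real.sqrt (u * Real.log u) - 1),
        (2 * a) ^ 3 * Real.exp (-a ^ 2 / (8 * u)))
      ≤ 2 ^ 8 * u ^ 2 * (6 * Real.log u + 1) / u ^ 6 := by
  have hu0 : (0:ℝ) < u := by linarith
  obtain ⟨hlog, hs1⟩ := gtsb_basic u hu
  set s := Real.sqrt (u * Real.log u) with hs
  have hs2 : s ^ 2 = u * Real.log u := Real.sq_sqrt (by nlinarith)
  set c := 8 * s - 1 with hc
  have hc2 : 49 * (u * Real.log u) ≤ c ^ 2 := by nlinarith [sq_nonneg (s - 1)]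
  have hx0 : 6 * Real.log u ≤ c ^ 2 / (8 * u) := by
    rw [le_div_iff₀ (by positivity)]
    nlinarith
  have hdec := gtsb_decay (a := 6 * Real.log u) (b := c ^ 2 / (8 * u)) (by positivity) hx0
  have hexp : Real.exp (-(6 * Real.log u)) = 1 / u ^ 6 := by
    rw [Real.exp_neg, show (6:ℝ) * Real.log u = Real.log (u ^ 6) from by
      rw [Real.log_pow]; push_cast; ring, Real.exp_log (by positivity)]
    simp
  rw [gtsb_integral_val u hu0 c]
  have h6 : (0:ℝ) < u ^ 6 := by positivity
  calc 2 ^ 8 * u ^ 2 * ((c ^ 2 / (8 * u) + 1) * Real.exp (-(c ^ 2 / (8 * u))))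
      ≤ 2 ^ 8 * u ^ 2 * ((6 * Real.log u + 1) * Real.exp (-(6 * Real.log u))) := by
        have h0 : (0:ℝ) ≤ 2 ^ 8 * u ^ 2 := by positivity
        exact mul_le_mul_of_nonneg_left hdec h0
    _ = 2 ^ 8 * u ^ 2 * (6 * Real.log u + 1) / u ^ 6 := by
        rw [hexp]; field_simp

lemma gtsb_part3 (u : ℝ) (hu : 2 ≤ u) :
    2 ^ 8 * u ^ 2 * (6 * Real.log u + 1) / u ^ 6 ≤ 2 ^ 8 := by
  have hu0 : (0:ℝ) < u := by linarith
  have hlog : Real.log u ≤ u - 1 := Real.log_le_sub_one_of_pos hu0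
  rw [div_le_iff₀ (by positivity)]
  have h1 : 6 * Real.log u + 1 ≤ 6 * u - 5 := by linarith
  have h2 : (0:ℝ) < u ^ 2 := by positivity
  nlinarith [sq_nonneg (u ^ 2 - 4), sq_nonneg (u - 2), sq_nonneg u, mul_pos h2 h2,
    pow_le_pow_left₀ (by norm_num : (0:ℝ) ≤ 2) hu 3]


lemma gtsb_part1 (u : ℝ) (hu : 2 ≤ u) :
    (∑' a : ℕ, if 8 * Real.sqrt (u * Real.log u) ≤ (a : ℝ) then
        ((a : ℝ) + 1) ^ 3 * Real.exp (-(a : ℝ) ^ 2 / (8 * u)) else 0)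
      ≤ ∫ a in Set.Ioi (8 * Real.sqrt (u * Real.log u) - 1),
          (2 * a) ^ 3 * Real.exp (-a ^ 2 / (8 * u)) := by
  have hu0 : (0:ℝ) < u := by linarith
  have h8u : (0:ℝ) < 8 * u := by linarith
  obtain ⟨hlog, hs1⟩ := gtsb_basic u hu
  set M : ℝ := 8 * Real.sqrt (u * Real.log u) with hM
  have hM8 : (8:ℝ) ≤ M := by rw [hM]; linarith
  set f : ℕ → ℝ := fun a => if M ≤ (a : ℝ) then
      ((a : ℝ) + 1) ^ 3 * Real.exp (-(a : ℝ) ^ 2 / (8 * u)) else 0 with hf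
  set g : ℝ → ℝ := fun x => (2 * x) ^ 3 * Real.exp (-x ^ 2 / (8 * u)) with hg
  set N : ℕ := ⌈M⌉₊ with hN
  have hMN : M ≤ (N : ℝ) := Nat.le_ceil M
  -- g integrable
  have hgInt : Integrable g := by
    have h := (gtsb_integrable u hu0).const_mul 8
    refine h.congr (Filter.EventuallyEq.of_eq (funext fun x => ?_))
    rw [hg]; ring
  -- summability of f
  set r : ℝ := Real.exp (-(1 / (8 * u))) with hr
  have hrpos : 0 < r := Real.exp_pos _
  have hr1 : r < 1 := Real.exp_lt_one_iff.2 (by rw [neg_lt_zero]; positivity)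
  have hrn : ‖r‖ < 1 := by rw [Real.norm_eq_abs, abs_of_pos hrpos]; exact hr1
  have hsk : ∀ k : ℕ, Summable (fun n : ℕ => (n : ℝ) ^ k * r ^ n) := fun k =>
    summable_pow_mul_geometric_of_norm_lt_one k hrn
  have hsum0 : Summable (fun n : ℕ => ((n : ℝ) + 1) ^ 3 * r ^ n) := by
    refine ((((hsk 3).add ((hsk 2).mul_left 3)).add
      (((hsk 1).mul_left 3).add (hsk 0))).congr fun n => ?_)
    ring
  have hfle : ∀ n : ℕ, f n ≤ ((n : ℝ) + 1) ^ 3 * r ^ n := by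
    intro n
    simp only [hf]
    by_cases hc : M ≤ (n : ℝ)
    · rw [if_pos hc]
      have hrpow : r ^ n = Real.exp ((n : ℕ) * -(1 / (8 * u))) := (Real.exp_nat_mul _ n).symm
      rw [hrpow]
      refine mul_le_mul_of_nonneg_left ?_ (by positivity)
      apply Real.exp_le_exp.2
      have hn2 : (n : ℝ) ≤ (n : ℝ) ^ 2 := by
        have := Nat.le_self_pow (two_ne_zero) n
        exact_mod_cast this
      have hrhs : (n:ℝ) * -(1 / (8 * u)) = -(n:ℝ) / (8 * u) := by field_simp
      rw [hrhs, div_le_div_iff₀ h8u h8u]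
      nlinarith [mul_nonneg (sub_nonneg.2 hn2) h8u.le]
    · rw [if_neg hc]; positivity
  have hfnonneg : ∀ n : ℕ, 0 ≤ f n := by
    intro n; simp only [hf]
    by_cases hc : M ≤ (n : ℝ)
    · rw [if_pos hc]; positivity
    · rw [if_neg hc]
  have hfsum : Summable f := Summable.of_nonneg_of_le hfnonneg hfle hsum0
  -- vanishing below N
  have h0 : ∀ i < N, f i = 0 := by
    intro i hi
    simp only [hf]
    exact if_neg (not_le.2 (Nat.lt_ceil.1 hi))
  have hts : ∑' a, f a = ∑' k, f (k + N) := by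
    rw [← hfsum.sum_add_tsum_nat_add N,
      Finset.sum_eq_zero fun i hi => h0 i (Finset.mem_range.1 hi), zero_add]
  -- the intervals
  set S : ℕ → Set ℝ := fun k => Set.Ioc ((N : ℝ) - 1 + k) ((N : ℝ) + k) with hS
  have hSmeas : ∀ k, MeasurableSet (S k) := fun k => measurableSet_Ioc
  have hSdisj : Pairwise (Function.onFun Disjoint S) := by
    intro i j hij
    simp only [Function.onFun, hS]
    rcases hij.lt_or_gt with h | h
    · rw [Set.disjoint_left]
      rintro x ⟨hx1, hx2⟩ ⟨hx3, hx4⟩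
      have : (i : ℝ) + 1 ≤ (j : ℝ) := by exact_mod_cast h
      linarith
    · rw [Set.disjoint_left]
      rintro x ⟨hx1, hx2⟩ ⟨hx3, hx4⟩
      have : (j : ℝ) + 1 ≤ (i : ℝ) := by exact_mod_cast h
      linarith
  have hU : (⋃ k, S k) = Set.Ioi ((N : ℝ) - 1) := by
    ext x
    simp only [Set.mem_iUnion, Set.mem_Ioc, Set.mem_Ioi, hS]
    constructor
    · rintro ⟨k, h1, h2⟩
      have : (0:ℝ) ≤ (k : ℝ) := Nat.cast_nonneg k
      linarith
    · intro hx
      set y := x - ((N : ℝ) - 1) with hy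
      have hy0 : 0 < y := by rw [hy]; linarith
      have hc1 : 1 ≤ ⌈y⌉₊ := Nat.one_le_ceil_iff.2 hy0
      refine ⟨⌈y⌉₊ - 1, ?_, ?_⟩
      · have hcast : ((⌈y⌉₊ - 1 : ℕ) : ℝ) = (⌈y⌉₊ : ℝ) - 1 := by
          push_cast [hc1]; ring
        rw [hcast]
        have := Nat.ceil_lt_add_one hy0.le
        rw [hy] at this ⊢
        linarith
      · have hcast : ((⌈y⌉₊ - 1 : ℕ) : ℝ) = (⌈y⌉₊ : ℝ) - 1 := by
          push_cast [hc1]; ring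
        rw [hcast]
        have := Nat.le_ceil y
        rw [hy] at this ⊢
        linarith
  -- per-term bound
  have hstep : ∀ k : ℕ, f (k + N) ≤ ∫ x in S k, g x := by
    intro k
    set A : ℝ := ((k + N : ℕ) : ℝ) with hA
    have hAval : A = (N : ℝ) + k := by rw [hA]; push_cast; ring
    have hA8 : (8:ℝ) ≤ A := by rw [hAval]; have : (0:ℝ) ≤ (k:ℝ) := Nat.cast_nonneg k; linarith
    have hcond : M ≤ A := by rw [hAval]; have : (0:ℝ) ≤ (k:ℝ) := Nat.cast_nonneg k; linarith
    have hfval : f (k + N) = (A + 1) ^ 3 * Real.exp (-A ^ 2 / (8 * u)) := by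
      simp only [hf]; rw [if_pos hcond]
    have hlb : ∀ x ∈ S k, (A + 1) ^ 3 * Real.exp (-A ^ 2 / (8 * u)) ≤ g x := by
      intro x hx
      obtain ⟨hx1, hx2⟩ := hx
      rw [hAval] at hA8
      have hx2' : x ≤ A := by rw [hAval]; exact hx2
      have hxpos : 0 < x := by linarith
      have h2x : A + 1 ≤ 2 * x := by rw [hAval]; linarith
      have hsq : x ^ 2 ≤ A ^ 2 := by nlinarith
      have hexp : Real.exp (-A ^ 2 / (8 * u)) ≤ Real.exp (-x ^ 2 / (8 * u)) := by
        apply Real.exp_le_exp.2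
        rw [div_le_div_iff₀ h8u h8u]
        nlinarith
      rw [hg]
      have hcube : (A + 1) ^ 3 ≤ (2 * x) ^ 3 := by
        apply pow_le_pow_left₀ (by linarith) h2x
      exact mul_le_mul hcube hexp (Real.exp_pos _).le (by positivity)
    have hvol : volume (S k) = 1 := by
      rw [hS]; simp only; rw [Real.volume_Ioc]
      norm_num
    have hge := setIntegral_ge_of_const_le (hSmeas k) (by rw [hvol]; exact ENNReal.one_ne_top)
      hlb hgInt.integrableOn
    rw [Measure.real, hvol] at hge
    simp only [ENNReal.toReal_one, mul_one, one_smul] at hge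
    rw [hfval]
    exact hge
  -- summing
  have hHS : HasSum (fun k => ∫ x in S k, g x) (∫ x in Set.Ioi ((N : ℝ) - 1), g x) := by
    have hion : IntegrableOn g (⋃ k, S k) := by rw [hU]; exact hgInt.integrableOn
    have h := hasSum_integral_iUnion hSmeas hSdisj hion
    rwa [hU] at h
  have h1 : ∑' k, f (k + N) ≤ ∑' k, ∫ x in S k, g x :=
    Summable.tsum_le_tsum hstep ((summable_nat_add_iff N).2 hfsum) hHS.summable
  have h2 : (∫ x in Set.Ioi ((N : ℝ) - 1), g x) ≤ ∫ x in Set.Ioi (M - 1), g x := by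
    apply setIntegral_mono_set hgInt.integrableOn
    · filter_upwards [ae_restrict_mem measurableSet_Ioi] with x hx
      have hx0 : 0 < x := by
        simp only [Set.mem_Ioi] at hx; linarith
      rw [hg]; positivity
    · exact HasSubset.Subset.eventuallyLE (Set.Ioi_subset_Ioi (by linarith))
  calc (∑' a, f a) = ∑' k, f (k + N) := hts
    _ ≤ ∑' k, ∫ x in S k, g x := h1
    _ = ∫ x in Set.Ioi ((N : ℝ) - 1), g x := hHS.tsum_eq
    _ ≤ ∫ x in Set.Ioi (M - 1), g x := h2

/-- Gaussian tail sum bound: Σ_{a ≥ 8√(u log u)} (a+1)³e^{-a²/(8u)} is bounded by the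
corresponding integral, which is at most 2⁸u²(6 log u + 1)/u⁶ ≤ 2⁸, for u ≥ 2. -/
theorem gaussian_tail_sum_bound
    (u : ℝ) (hu : 2 ≤ u) (t : ℕ) (hut : u ≤ t) :
    (∑' a : ℕ, if 8 * Real.sqrt (u * Real.log u) ≤ (a : ℝ) then
        ((a : ℝ) + 1) ^ 3 * Real.exp (-(a : ℝ) ^ 2 / (8 * u)) else 0)
      ≤ (∫ a in Set.Ioi (8 * Real.sqrt (u * Real.log u) - 1),
          (2 * a) ^ 3 * Real.exp (-a ^ 2 / (8 * u))) ∧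
    (∫ a in Set.Ioi (8 * Real.sqrt (u * Real.log u) - 1),
        (2 * a) ^ 3 * Real.exp (-a ^ 2 / (8 * u)))
      ≤ 2 ^ 8 * u ^ 2 * (6 * Real.log u + 1) / u ^ 6 ∧
    2 ^ 8 * u ^ 2 * (6 * Real.log u + 1) / u ^ 6 ≤ 2 ^ 8 :=
  ⟨gtsb_part1 u hu, gtsb_part2 u hu, gtsb_part3 u hu⟩
end
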